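/- Let C be an abelian category, n ≥ 0, and F : ComposableArrows C n a chain of n composable arrows in C. Then there exist T, E : ComposableArrows C n and natural transformations i : T ⟶ F and p : F ⟶ E such that: (1) for every 0 ≤ k ≤ n, the sequence 0 → T.obj k → F.obj k → E.obj k → 0 given by the components of i and p is a short exact sequence in C; (2) the object T.obj n is a zero object; and (3) every structure map E.obj k → E.obj (k+1) of E is a monomorphism. (Explicitly, one may take T.obj k to be the kernel, and E.obj k the image, of the composite map F.obj k → F.obj n.) -/

import Mathlib

open CategoryTheory CategoryTheory.Limits

namespace TorsionSESAux

universe v u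

variable {C : Type u} [Category.{v} C] [Abelian C] {n : ℕ} (F : ComposableArrows C n)

/-- The map from `F.obj k` to the last object. -/
noncomputable def lastMap (k : Fin (n + 1)) : F.obj k ⟶ F.obj (Fin.last n) :=
  F.map (homOfLE (Fin.le_last k))

lemma map_lastMap {k m : Fin (n + 1)} (f : k ⟶ m) :
    F.map f ≫ lastMap F m = lastMap F k := by
  rw [lastMap, lastMap, ← F.map_comp]
  congr 1

lemma lastMap_last : lastMap F (Fin.last n) = 𝟙 _ := by
  rw [lastMap, show homOfLE (Fin.le_last (Fin.last n)) = 𝟙 (Fin.last n) from rfl, F.map_id]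

/-- The torsion part: kernels of the maps to the last object. -/
noncomputable def T : ComposableArrows C n where
  obj k := kernel (lastMap F k)
  map {k m} f := kernel.lift (lastMap F m) (kernel.ι _ ≫ F.map f) (by
    rw [Category.assoc, map_lastMap, kernel.condition])
  map_id k := by apply equalizer.hom_ext; simp
  map_comp f g := by apply equalizer.hom_ext; simp

/-- The mono factorisation used to define the maps of `E`. -/
@[reducible]
noncomputable def EMF {k m : Fin (n + 1)} (f : k ⟶ m) : MonoFactorisation (lastMap F k) where
  I := image (lastMap F m)
  m := image.ι _
  e := F.map f ≫ factorThruImage _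
  fac := by rw [Category.assoc, image.fac, map_lastMap]

lemma EMF_fac {k m : Fin (n + 1)} (f : k ⟶ m) :
    image.lift (EMF F f) ≫ image.ι (lastMap F m) = image.ι (lastMap F k) :=
  image.lift_fac _

/-- The torsion-free part: images of the maps to the last object. -/
noncomputable def E : ComposableArrows C n where
  obj k := image (lastMap F k)
  map {k m} f := image.lift (EMF F f)
  map_id k := by
    rw [← cancel_mono (image.ι (lastMap F k)), EMF_fac, Category.id_comp]
  map_comp f g := by
    rw [← cancel_mono (image.ι (lastMap F _)), EMF_fac, Category.assoc, EMF_fac, EMF_fac]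

noncomputable def iHom : T F ⟶ F where
  app k := kernel.ι (lastMap F k)
  naturality k m f := by simp [T]

noncomputable def pHom : F ⟶ E F where
  app k := factorThruImage (lastMap F k)
  naturality k m f := by
    show F.map f ≫ factorThruImage _ = factorThruImage _ ≫ image.lift (EMF F f)
    rw [← cancel_mono (image.ι (lastMap F m)), Category.assoc, image.fac, map_lastMap,
      Category.assoc, EMF_fac, image.fac]

lemma w (k : Fin (n + 1)) :
    kernel.ι (lastMap F k) ≫ factorThruImage (lastMap F k) = 0 := by
  rw [← cancel_mono (image.ι (lastMap F k)), Category.assoc, image.fac,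
    kernel.condition, zero_comp]

noncomputable def isLimitFork (k : Fin (n + 1)) :
    IsLimit (KernelFork.ofι (kernel.ι (lastMap F k)) (w F k)) :=
  KernelFork.IsLimit.ofι _ _
    (fun s hs => kernel.lift _ s (by
      rw [← image.fac (lastMap F k), ← Category.assoc, hs, zero_comp]))
    (fun s hs => kernel.lift_ι _ _ _)
    (fun s hs m hm => by rw [← cancel_mono (kernel.ι (lastMap F k)), hm, kernel.lift_ι])

end TorsionSESAux

open TorsionSESAux

/-- Every chain `F` of `n` composable arrows in an abelian category `C`
fits into a short exact sequence of chains `0 ⟶ T ⟶ F ⟶ E ⟶ 0` (componentwise short exact),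
where the last object of `T` is zero and all structure maps of `E` are monomorphisms. -/
theorem torsion_ses_of_composableArrows
    (C : Type*) [Category C] [Abelian C] (n : ℕ) (F : ComposableArrows C n) :
    ∃ (T E : ComposableArrows C n) (i : T ⟶ F) (p : F ⟶ E),
      (∀ k : Fin (n + 1),
        ∃ w : i.app k ≫ p.app k = 0, (ShortComplex.mk (i.app k) (p.app k) w).ShortExact) ∧
      IsZero (T.obj' n) ∧
      (∀ (k : ℕ) (hk : k < n), Mono (E.map' k (k + 1) (by omega) (by omega))) := by
  refine ⟨T F, E F, iHom F, pHom F, fun k => ⟨w F k, ?_⟩, ?_, fun k hk => ?_⟩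
  · exact
      { exact := ShortComplex.exact_of_f_is_kernel _ (isLimitFork F k)
        mono_f := by dsimp [iHom, pHom]; exact (inferInstance : Mono (kernel.ι (lastMap F k)))
        epi_g := by dsimp [iHom, pHom]; exact (inferInstance : Epi (factorThruImage (lastMap F k))) }
  · have : Mono (lastMap F (Fin.last n)) := by rw [lastMap_last F]; infer_instance
    exact @IsZero.of_mono_eq_zero _ _ _ _ _ (kernel.ι (lastMap F (Fin.last n))) (inferInstance : Mono (kernel.ι (lastMap F (Fin.last n))))
      (kernel.ι_of_mono _)
  · exact @mono_of_mono_fac _ _ _ _ _ _ _ _ (inferInstance : Mono (image.ι (lastMap F _))) (EMF_fac F _)
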